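/- Let 0 < m < 1 < M and let s, y ∈ ℝⁿ with s ≠ 0. Let γ be given by the selection rule (20). Then γ ∈ [0, 1], and the vector z = γ s + (1 − γ) y satisfies both curvature conditions: zᵀs ≥ m sᵀs and zᵀz ≤ M zᵀs. -/

import Mathlib

open RealInnerProductSpace

/-- `γ̌ = (m sᵀs − yᵀs)/(sᵀs − yᵀs)`. -/
noncomputable def gammaCheck {n : ℕ} (m : ℝ) (s y : EuclideanSpace ℝ (Fin n)) : ℝ :=
  (m * ⟪s, s⟫ - ⟪y, s⟫) / (⟪s, s⟫ - ⟪y, s⟫)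

/-- `γ̲`, the smaller root of
`p(γ) = γ²(s−y)ᵀ(s−y) + γ(s−y)ᵀ(2y − Ms) + yᵀ(y − Ms)` (for `s ≠ y`), given by the
explicit formula (17) of the paper. -/
noncomputable def gammaLower {n : ℕ} (M : ℝ) (s y : EuclideanSpace ℝ (Fin n)) : ℝ :=
  (⟪s - y, M • s - (2 : ℝ) • y⟫ -
      Real.sqrt (M ^ 2 * ⟪s, s - y⟫ ^ 2 +
        4 * (M - 1) * (⟪s, s⟫ * ⟪y, y⟫ - ⟪y, s⟫ ^ 2))) /
    (2 * ⟪s - y, s - y⟫)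

open Classical in
/-- The selection rule (20): `γ = max{γ̲, γ̌}` if `m sᵀs > yᵀs`;
`γ = max{0, γ̲}` if `m sᵀs ≤ yᵀs` and `s ≠ y`; `γ = 0` if `s = y`. -/
noncomputable def selectGamma {n : ℕ} (m M : ℝ) (s y : EuclideanSpace ℝ (Fin n)) : ℝ :=
  if s = y then 0
  else if ⟪y, s⟫ < m * ⟪s, s⟫ then max (gammaLower M s y) (gammaCheck m s y)
  else max 0 (gammaLower M s y)

set_option maxHeartbeats 1000000 in

lemma quad_key (m M a b c γL γ : ℝ) (hm0 : 0 < m) (hm1 : m < 1) (hM : 1 < M)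
    (ha : 0 < a) (hcs : b ^ 2 ≤ a * c) (hA : 0 < a - 2 * b + c)
    (hγL : γL = (M * (a - b) - 2 * (b - c) -
        Real.sqrt (M ^ 2 * (a - b) ^ 2 + 4 * (M - 1) * (a * c - b ^ 2))) /
        (2 * (a - 2 * b + c)))
    (hγ : γ = if b < m * a then max γL ((m * a - b) / (a - b)) else max 0 γL) :
    0 ≤ γ ∧ γ ≤ 1 ∧ m * a ≤ γ * a + (1 - γ) * b ∧
      γ ^ 2 * a + 2 * (γ * (1 - γ)) * b + (1 - γ) ^ 2 * c
        ≤ M * (γ * a + (1 - γ) * b) := by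
  set A : ℝ := a - 2 * b + c with hAdef
  set B : ℝ := 2 * (b - c) - M * (a - b) with hBdef
  set C : ℝ := c - M * b with hCdef
  set D : ℝ := M ^ 2 * (a - b) ^ 2 + 4 * (M - 1) * (a * c - b ^ 2) with hDdef
  have hD0 : 0 ≤ D := by
    have h1 : 0 ≤ (M - 1) * (a * c - b ^ 2) := by
      apply mul_nonneg <;> nlinarith
    nlinarith [sq_nonneg (M * (a - b))]
  set r : ℝ := Real.sqrt D with hrdef
  have hr0 : 0 ≤ r := Real.sqrt_nonneg _
  have hr2 : r ^ 2 = D := Real.sq_sqrt hD0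
  have hdisc : B ^ 2 - 4 * A * C = D := by rw [hBdef, hAdef, hCdef, hDdef]; ring
  have hγL' : γL = (-B - r) / (2 * A) := by rw [hγL, hBdef]; ring_nf
  have hA2 : (0:ℝ) < 2 * A := by linarith
  have hsq : (B + 2 * A) ^ 2 < r ^ 2 := by
    rw [hr2, ← hdisc]; nlinarith [mul_pos hA (mul_pos ha (sub_pos.2 hM))]
  have habs := abs_lt_of_sq_lt_sq hsq hr0
  rw [abs_lt] at habs
  -- γL < 1 and the upper root γU > 1
  set γU : ℝ := (-B + r) / (2 * A) with hγUdef
  have hγL1 : γL < 1 := by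
    rw [hγL', div_lt_one hA2]; linarith [habs.1]
  have hγU1 : 1 < γU := by
    rw [hγUdef, lt_div_iff₀ hA2]; linarith [habs.2]
  -- Vieta's formulas
  have hAne : (2 * A) ≠ 0 := ne_of_gt hA2
  have h1 : 2 * A * γL = -B - r := by
    rw [hγL']; field_simp
  have h2 : 2 * A * γU = -B + r := by
    rw [hγUdef]; field_simp
  have hsum' : A * γL + A * γU = -B := by linarith
  have hprod' : (4 * A) * (A * (γL * γU)) = (4 * A) * C := by
    linear_combination (2 * A * γU) * h1 + (-B - r) * h2 - hr2 + hdisc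
  have hprod : A * (γL * γU) = C := mul_left_cancel₀ (by linarith : (4:ℝ) * A ≠ 0) hprod'
  -- factorization of the quadratic
  have hfac : ∀ t : ℝ, A * t ^ 2 + B * t + C = A * ((t - γL) * (t - γU)) := by
    intro t
    linear_combination t * hsum' - hprod
  -- the quadratic is ≤ 0 on [γL, 1]
  have hquad : ∀ t : ℝ, γL ≤ t → t ≤ 1 → A * t ^ 2 + B * t + C ≤ 0 := by
    intro t h1 h2
    rw [hfac t]
    have : (t - γL) * (t - γU) ≤ 0 :=
      mul_nonpos_of_nonneg_of_nonpos (by linarith) (by linarith)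
    exact mul_nonpos_of_nonneg_of_nonpos (le_of_lt hA) this
  by_cases hb : b < m * a
  · -- case m a > b
    rw [if_pos hb] at hγ
    have hd : 0 < a - b := by nlinarith
    have hγC0 : 0 ≤ (m * a - b) / (a - b) := div_nonneg (by linarith) (by linarith)
    have hγC1 : (m * a - b) / (a - b) ≤ 1 := by
      rw [div_le_one hd]; nlinarith
    have hγ0 : 0 ≤ γ := by rw [hγ]; exact le_trans hγC0 (le_max_right _ _)
    have hγ1 : γ ≤ 1 := by rw [hγ]; exact max_le (le_of_lt hγL1) hγC1
    have hγge : γL ≤ γ := by rw [hγ]; exact le_max_left _ _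
    have hcond1 : m * a ≤ γ * a + (1 - γ) * b := by
      have h : (m * a - b) / (a - b) ≤ γ := by rw [hγ]; exact le_max_right _ _
      rw [div_le_iff₀ hd] at h
      nlinarith
    refine ⟨hγ0, hγ1, hcond1, ?_⟩
    have := hquad γ hγge hγ1
    rw [hAdef, hBdef, hCdef] at this
    nlinarith
  · -- case m a ≤ b
    rw [if_neg hb] at hγ
    have hb' : m * a ≤ b := not_lt.1 hb
    have hγ0 : 0 ≤ γ := by rw [hγ]; exact le_max_left _ _
    have hγ1 : γ ≤ 1 := by rw [hγ]; exact max_le zero_le_one (le_of_lt hγL1)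
    have hγge : γL ≤ γ := by rw [hγ]; exact le_max_right _ _
    have hcond1 : m * a ≤ γ * a + (1 - γ) * b := by
      nlinarith [mul_nonneg hγ0 (by nlinarith : (0:ℝ) ≤ a - m * a),
        mul_nonneg (by linarith : (0:ℝ) ≤ 1 - γ) (by linarith : (0:ℝ) ≤ b - m * a)]
    refine ⟨hγ0, hγ1, hcond1, ?_⟩
    have := hquad γ hγge hγ1
    rw [hAdef, hBdef, hCdef] at this
    nlinarith

set_option maxHeartbeats 1000000 in

/-- **The selected `γ` lies in `[0,1]` and enforces both curvature conditions.**
Let `0 < m < 1 < M` and `s, y ∈ ℝⁿ` with `s ≠ 0`.  Let `γ` be given by the selection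
rule (20).  Then `γ ∈ [0,1]`, and `z = γ s + (1 − γ) y` satisfies `zᵀs ≥ m sᵀs`
and `zᵀz ≤ M zᵀs`. -/
theorem stmt3 {n : ℕ} (m M : ℝ) (hm0 : 0 < m) (hm1 : m < 1) (hM : 1 < M)
    (s y : EuclideanSpace ℝ (Fin n)) (hs : s ≠ 0)
    (γ : ℝ) (hγ : γ = selectGamma m M s y)
    (z : EuclideanSpace ℝ (Fin n)) (hz : z = γ • s + (1 - γ) • y) :
    γ ∈ Set.Icc (0 : ℝ) 1 ∧ m * ⟪s, s⟫ ≤ ⟪z, s⟫ ∧ ⟪z, z⟫ ≤ M * ⟪z, s⟫ := by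
  set a : ℝ := ⟪s, s⟫ with hadef
  set b : ℝ := ⟪y, s⟫ with hbdef
  set c : ℝ := ⟪y, y⟫ with hcdef
  have hb2 : ⟪s, y⟫ = b := real_inner_comm y s
  have ha : 0 < a :=
    lt_of_le_of_ne real_inner_self_nonneg (fun h => hs (inner_self_eq_zero.1 h.symm))
  have hcs : b ^ 2 ≤ a * c := by
    have := real_inner_mul_inner_self_le y s
    nlinarith [this]
  have hzs : ⟪z, s⟫ = γ * a + (1 - γ) * b := by
    rw [hz]
    simp only [inner_add_left, real_inner_smul_left, ← hadef, ← hbdef]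
  have hzz : ⟪z, z⟫ = γ ^ 2 * a + 2 * (γ * (1 - γ)) * b + (1 - γ) ^ 2 * c := by
    rw [hz]
    simp only [inner_add_left, inner_add_right, real_inner_smul_left, real_inner_smul_right,
      hb2, ← hadef, ← hbdef, ← hcdef]
    ring
  by_cases hsy : s = y
  · have hγ0 : γ = 0 := by rw [hγ, selectGamma, if_pos hsy]
    subst hsy
    refine ⟨⟨le_of_eq hγ0.symm, by rw [hγ0]; norm_num⟩, ?_, ?_⟩
    · rw [hzs, hγ0]; nlinarith
    · rw [hzz, hzs, hγ0]; nlinarith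
  · have hA : 0 < a - 2 * b + c := by
      have h1 : 0 < ⟪s - y, s - y⟫ :=
        lt_of_le_of_ne real_inner_self_nonneg
          (fun h => (sub_ne_zero.2 hsy) (inner_self_eq_zero.1 h.symm))
      have h2 : ⟪s - y, s - y⟫ = a - 2 * b + c := by
        simp only [inner_sub_left, inner_sub_right, hb2, ← hadef, ← hbdef, ← hcdef]
        ring
      linarith [h2 ▸ h1]
    have hGL : gammaLower M s y = (M * (a - b) - 2 * (b - c) -
        Real.sqrt (M ^ 2 * (a - b) ^ 2 + 4 * (M - 1) * (a * c - b ^ 2))) /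
        (2 * (a - 2 * b + c)) := by
      rw [gammaLower]
      have e1 : ⟪s - y, M • s - (2:ℝ) • y⟫ = M * (a - b) - 2 * (b - c) := by
        simp only [inner_sub_left, inner_sub_right, real_inner_smul_right, hb2,
          ← hadef, ← hbdef, ← hcdef]
        ring
      have e2 : ⟪s, s - y⟫ = a - b := by
        simp only [inner_sub_right, hb2, ← hadef]
      have e3 : ⟪s - y, s - y⟫ = a - 2 * b + c := by
        simp only [inner_sub_left, inner_sub_right, hb2, ← hadef, ← hbdef, ← hcdef]
        ring
      rw [e1, e2, e3]
    have hGC : gammaCheck m s y = (m * a - b) / (a - b) := rfl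
    have hγ' : γ = if b < m * a then max (gammaLower M s y) ((m * a - b) / (a - b))
        else max 0 (gammaLower M s y) := by
      rw [hγ, selectGamma, if_neg hsy, hGC]
    obtain ⟨h0, h1, h2, h3⟩ := quad_key m M a b c (gammaLower M s y) γ hm0 hm1 hM ha hcs hA hGL hγ'
    exact ⟨⟨h0, h1⟩, by rw [hzs]; exact h2, by rw [hzz, hzs]; exact h3⟩
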